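/- Along the classical GUP harmonic oscillator trajectory with initial conditions $x(0^+) \to$ turning point $a$ and $p \to 0$, the energy is conserved: for all $t$ with $\sin(\sqrt{1+\eta^2}\,\omega t) \ne 0$, $\frac{\tan^2(\sqrt{\beta} p(t))}{2\beta m} + \frac{1}{2} m\omega^2 x(t)^2 = \frac{1}{2} m \omega^2 a^2$, where $p(t)$ and $x(t)$ are the explicit solutions given in terms of $\eta = \sqrt{\beta} m\omega a$. -/

import Mathlib

noncomputable def gupCot' (u : ℝ) : ℝ := Real.cos u / Real.sin u

theorem gup_oscillator_energy_conservation (β m ω a : ℝ) (hβ : 0 < β)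
    (hm : 0 < m) (hω : 0 < ω) :
    let η := Real.sqrt β * m * ω * a
    let p : ℝ → ℝ := fun t =>
      (1 / Real.sqrt β) * Real.arctan (η /
        Real.sqrt (1 + (1 + η ^ 2) * gupCot' (Real.sqrt (1 + η ^ 2) * ω * t) ^ 2))
    let x : ℝ → ℝ := fun t =>
      -(a * Real.sqrt (1 + η ^ 2) * gupCot' (Real.sqrt (1 + η ^ 2) * ω * t)) /
        Real.sqrt (1 + (1 + η ^ 2) * gupCot' (Real.sqrt (1 + η ^ 2) * ω * t) ^ 2)
    ∀ t : ℝ, Real.sin (Real.sqrt (1 + η ^ 2) * ω * t) ≠ 0 →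
      Real.tan (Real.sqrt β * p t) ^ 2 / (2 * β * m) +
        (1 / 2) * m * ω ^ 2 * x t ^ 2 = (1 / 2) * m * ω ^ 2 * a ^ 2 := by
  intro η p x t _
  have hβs : Real.sqrt β ≠ 0 := ne_of_gt (Real.sqrt_pos.2 hβ)
  set c : ℝ := gupCot' (Real.sqrt (1 + η ^ 2) * ω * t) with hc
  have hη2 : η ^ 2 = β * (m * ω * a) ^ 2 := by
    simp only [η, mul_pow, Real.sq_sqrt hβ.le]; ring
  have hDpos : (0:ℝ) < 1 + (1 + η ^ 2) * c ^ 2 := by positivity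
  have hs : Real.sqrt (1 + (1 + η ^ 2) * c ^ 2) ≠ 0 :=
    ne_of_gt (Real.sqrt_pos.2 hDpos)
  have hsq : Real.sqrt (1 + (1 + η ^ 2) * c ^ 2) ^ 2 = 1 + (1 + η ^ 2) * c ^ 2 :=
    Real.sq_sqrt hDpos.le
  have h1 : Real.sqrt (1 + η ^ 2) ^ 2 = 1 + η ^ 2 := Real.sq_sqrt (by positivity)
  have hp : Real.sqrt β * p t =
      Real.arctan (η / Real.sqrt (1 + (1 + η ^ 2) * c ^ 2)) := by
    simp only [p]
    field_simp
    rfl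
  have hx2 : (-(a * Real.sqrt (1 + η ^ 2) * c)) ^ 2 = a ^ 2 * (1 + η ^ 2) * c ^ 2 := by
    rw [neg_sq, mul_pow, mul_pow, h1]
  simp only [x]
  rw [hp, Real.tan_arctan, div_pow, div_pow, hsq, ← hc, hx2, hη2]
  field_simp
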